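/- For every natural number n and every nonzero real number λ, the Legendre polynomial satisfies, for all real x, P_n(λx) = Σ_{k=⌈n/2⌉}^{n} (1/(2^n n!)) · C(n,k) · (λ²−1)^{n−k} · λ^{2k−n} · d^n/dx^n[(x²−1)^k], where C(n,k) is the binomial coefficient (the terms with k < ⌈n/2⌉ vanish because the n-th derivative of (x²−1)^k is zero for 2k < n). -/

import Mathlib

open Polynomial

/-- Legendre polynomial via Rodrigues' formula. -/
noncomputable def legendre (n : ℕ) : ℝ → ℝ :=
  fun x => (1 / (2 ^ n * (n.factorial : ℝ))) * iteratedDeriv n (fun y => (y ^ 2 - 1) ^ n) x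

private lemma iteratedDeriv_polyEval (n : ℕ) (p : ℝ[X]) :
    iteratedDeriv n (fun y => p.eval y) = fun x => (derivative^[n] p).eval x := by
  induction n with
  | zero => simp
  | succ n ih =>
    rw [iteratedDeriv_succ, ih]
    funext x
    rw [Function.iterate_succ_apply']
    exact Polynomial.deriv (𝕜 := ℝ) _

private lemma iterate_derivative_comp_C_mul_X (n : ℕ) (p : ℝ[X]) (l : ℝ) :
    derivative^[n] (p.comp (C l * X)) = C (l ^ n) * (derivative^[n] p).comp (C l * X) := by
  induction n generalizing p with
  | zero => simp
  | succ n ih =>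
    rw [Function.iterate_succ_apply, derivative_comp, Function.iterate_succ_apply]
    simp only [derivative_mul, derivative_C, derivative_X, zero_mul, mul_one, zero_add]
    rw [iterate_derivative_C_mul, ih (derivative p), pow_succ, map_mul]
    ring

private lemma key_poly (n : ℕ) (l : ℝ) :
    (((C l * X) ^ 2 - 1 : ℝ[X]) ^ n) =
      ∑ k ∈ Finset.range (n + 1),
        C ((n.choose k : ℝ) * (l ^ 2 - 1) ^ (n - k) * l ^ (2 * k)) * (X ^ 2 - 1) ^ k := by
  have h : ((C l * X) ^ 2 - 1 : ℝ[X]) = C (l ^ 2) * (X ^ 2 - 1) + C (l ^ 2 - 1) := by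
    simp only [map_sub, map_pow, map_one]
    ring
  rw [h, add_pow]
  refine Finset.sum_congr rfl fun k hk => ?_
  simp only [map_mul, map_pow, map_sub, map_one, map_natCast, mul_pow, ← pow_mul]
  ring

theorem legendre_scaling_binomial_sum (n : ℕ) (l : ℝ) (hl : l ≠ 0) (x : ℝ) :
    legendre n (l * x) =
      ∑ k ∈ Finset.Icc ((n + 1) / 2) n,
        (1 / (2 ^ n * (n.factorial : ℝ))) * (n.choose k : ℝ) * (l ^ 2 - 1) ^ (n - k) *
          l ^ (2 * k - n) * iteratedDeriv n (fun y => (y ^ 2 - 1) ^ k) x := by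
  -- rewrite all iterated derivatives as polynomial evaluations
  have hfun : ∀ k : ℕ, (fun y : ℝ => (y ^ 2 - 1) ^ k) =
      fun y => (((X : ℝ[X]) ^ 2 - 1) ^ k).eval y := by
    intro k; funext y; simp
  -- key identity after n-fold differentiation
  have main : (derivative^[n] (((X : ℝ[X]) ^ 2 - 1) ^ n)).eval (l * x) =
      ∑ k ∈ Finset.Icc ((n + 1) / 2) n,
        (n.choose k : ℝ) * (l ^ 2 - 1) ^ (n - k) * l ^ (2 * k - n) *
          (derivative^[n] (((X : ℝ[X]) ^ 2 - 1) ^ k)).eval x := by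
    have hcomp : (((X : ℝ[X]) ^ 2 - 1) ^ n).comp (C l * X) = ((C l * X) ^ 2 - 1) ^ n := by
      simp
    have h1 := congrArg (fun p : ℝ[X] => (derivative^[n] p).eval x)
      (hcomp.trans (key_poly n l))
    simp only [iterate_derivative_comp_C_mul_X, iterate_derivative_sum,
      iterate_derivative_C_mul, eval_mul, eval_C, eval_comp, eval_mul, eval_X,
      Polynomial.eval_finset_sum] at h1
    -- h1 : l^n * eval (l*x) (D^n q_n) = ∑ k ∈ range (n+1), coeff * eval x (D^n q_k)
    have hln : (l : ℝ) ^ n ≠ 0 := pow_ne_zero _ hl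
    -- restrict the range sum to Icc
    have hsub : Finset.Icc ((n + 1) / 2) n ⊆ Finset.range (n + 1) := by
      intro k hk
      simp only [Finset.mem_Icc] at hk
      simp [Nat.lt_succ_iff, hk.2]
    have hzero : ∀ k ∈ Finset.range (n + 1), k ∉ Finset.Icc ((n + 1) / 2) n →
        (C ((n.choose k : ℝ) * (l ^ 2 - 1) ^ (n - k) * l ^ (2 * k)) *
          derivative^[n] (((X : ℝ[X]) ^ 2 - 1) ^ k)).eval x = 0 := by
      intro k hk hk'
      have hklt : 2 * k < n := by
        simp only [Finset.mem_range, Finset.mem_Icc, not_and, not_le] at hk hk'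
        omega
      have hdeg : (((X : ℝ[X]) ^ 2 - 1) ^ k).natDegree < n := by
        calc (((X : ℝ[X]) ^ 2 - 1) ^ k).natDegree ≤ k * ((X : ℝ[X]) ^ 2 - 1).natDegree :=
              natDegree_pow_le
          _ ≤ k * 2 := by
              gcongr
              exact (natDegree_sub_le _ _).trans (by simp)
          _ < n := by omega
      rw [iterate_derivative_eq_zero hdeg, mul_zero, eval_zero]
    have h2 : (∑ k ∈ Finset.range (n + 1),
        (C ((n.choose k : ℝ) * (l ^ 2 - 1) ^ (n - k) * l ^ (2 * k)) *
          derivative^[n] (((X : ℝ[X]) ^ 2 - 1) ^ k)).eval x) =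
        ∑ k ∈ Finset.Icc ((n + 1) / 2) n,
        (C ((n.choose k : ℝ) * (l ^ 2 - 1) ^ (n - k) * l ^ (2 * k)) *
          derivative^[n] (((X : ℝ[X]) ^ 2 - 1) ^ k)).eval x :=
      (Finset.sum_subset hsub (fun k hk hk' => hzero k hk hk')).symm
    rw [mul_comm] at h1
    have h3 : (derivative^[n] (((X : ℝ[X]) ^ 2 - 1) ^ n)).eval (l * x) =
        (∑ k ∈ Finset.range (n + 1),
          (C ((n.choose k : ℝ) * (l ^ 2 - 1) ^ (n - k) * l ^ (2 * k)) *
            derivative^[n] (((X : ℝ[X]) ^ 2 - 1) ^ k)).eval x) / l ^ n := by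
      rw [eq_div_iff hln]
      simpa [eval_mul, eval_C, mul_comm] using h1
    rw [h3, h2, Finset.sum_div]
    refine Finset.sum_congr rfl fun k hk => ?_
    simp only [Finset.mem_Icc] at hk
    have h2k : n ≤ 2 * k := by omega
    have : l ^ (2 * k) = l ^ (2 * k - n) * l ^ n := by
      rw [← pow_add]; congr 1; omega
    rw [eval_mul, eval_C, this]
    field_simp
  simp only [legendre, hfun, iteratedDeriv_polyEval]
  rw [main, Finset.mul_sum]
  refine Finset.sum_congr rfl fun k hk => ?_
  ring
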